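/- (Residual of the Gl-QFOM iterate.) Let A ∈ ℍ^{n×n}, B, X₀ ∈ ℍ^{n×m}, R₀ := B − A X₀, β := ‖R₀‖ > 0, V₁ := R₀ β^{-1}, and assume the Arnoldi hypotheses through step k. Suppose y ∈ ℍ^k satisfies H_k y = β e₁, i.e. Σ_{j=1}^k h_{i,j} y_j = β δ_{i1} for i = 1, …, k (with h_{i,j} := 0 for i > j+1). Set X_k := X₀ + Σ_{j=1}^k V_j y_j. Then B − A X_k = − (V_{k+1} y_k) · h_{k+1,k} (where y_k is the last component of y and h_{k+1,k} is a positive real), and consequently ‖B − A X_k‖ = h_{k+1,k} · |y_k|. -/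

import Mathlib

open Matrix Quaternion

noncomputable section

/-- Entrywise right scalar multiple of a quaternion matrix. -/
def qsmul {n m : ℕ} (X : Matrix (Fin n) (Fin m) ℍ[ℝ]) (a : ℍ[ℝ]) :
    Matrix (Fin n) (Fin m) ℍ[ℝ] := fun i j => X i j * a

/-- Frobenius norm of a quaternion matrix: `‖X‖ = (Re tr(X^* X))^{1/2}`. -/
def qnorm {n m : ℕ} (X : Matrix (Fin n) (Fin m) ℍ[ℝ]) : ℝ :=
  Real.sqrt (Matrix.trace (Xᴴ * X)).re

/-- The Arnoldi hypotheses through step `k`. -/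
structure ArnoldiData (n m k : ℕ) (A : Matrix (Fin n) (Fin n) ℍ[ℝ])
    (V : ℕ → Matrix (Fin n) (Fin m) ℍ[ℝ]) (h : ℕ → ℕ → ℍ[ℝ]) : Prop where
  normV1 : qnorm (V 1) = 1
  hdef : ∀ j ∈ Finset.Icc 1 k, ∀ i ∈ Finset.Icc 1 j,
      h i j = Matrix.trace ((V i)ᴴ * (A * V j))
  hsub : ∀ j ∈ Finset.Icc 1 k,
      h (j+1) j = (qnorm (A * V j - ∑ i ∈ Finset.Icc 1 j, qsmul (V i) (h i j)) : ℍ[ℝ])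
  hsub_ne : ∀ j ∈ Finset.Icc 1 k, h (j+1) j ≠ 0
  vdef : ∀ j ∈ Finset.Icc 1 k,
      V (j+1) = qsmul (A * V j - ∑ i ∈ Finset.Icc 1 j, qsmul (V i) (h i j)) (h (j+1) j)⁻¹

lemma re_sum' {α : Type*} (s : Finset α) (c : α → ℍ[ℝ]) :
    (∑ j ∈ s, c j).re = ∑ j ∈ s, (c j).re :=
  map_sum (QuaternionAlgebra.reₗ (-1 : ℝ) (0 : ℝ) (-1 : ℝ)) c s

lemma qsmul_qsmul {n m : ℕ} (X : Matrix (Fin n) (Fin m) ℍ[ℝ]) (a b : ℍ[ℝ]) :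
    qsmul (qsmul X a) b = qsmul X (a * b) := by
  funext i j; simp [qsmul, mul_assoc]

lemma qsmul_one {n m : ℕ} (X : Matrix (Fin n) (Fin m) ℍ[ℝ]) : qsmul X 1 = X := by
  funext i j; simp [qsmul]

lemma qsmul_zero {n m : ℕ} (X : Matrix (Fin n) (Fin m) ℍ[ℝ]) : qsmul X 0 = 0 := by
  funext i j; simp [qsmul]

lemma mul_qsmul {n m : ℕ} (A : Matrix (Fin n) (Fin n) ℍ[ℝ])
    (X : Matrix (Fin n) (Fin m) ℍ[ℝ]) (a : ℍ[ℝ]) :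
    A * qsmul X a = qsmul (A * X) a := by
  funext i j; simp [qsmul, Matrix.mul_apply, Finset.sum_mul, mul_assoc]

lemma qsmul_sum {n m : ℕ} (X : Matrix (Fin n) (Fin m) ℍ[ℝ]) (s : Finset ℕ)
    (c : ℕ → ℍ[ℝ]) : ∑ j ∈ s, qsmul X (c j) = qsmul X (∑ j ∈ s, c j) := by
  funext i j; simp [qsmul, Finset.mul_sum, Matrix.sum_apply]

lemma sum_qsmul {n m : ℕ} (s : Finset ℕ) (X : ℕ → Matrix (Fin n) (Fin m) ℍ[ℝ])
    (a : ℍ[ℝ]) : qsmul (∑ i ∈ s, X i) a = ∑ i ∈ s, qsmul (X i) a := by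
  funext i j; simp [qsmul, Finset.sum_mul, Matrix.sum_apply]

lemma trace_re {n m : ℕ} (X : Matrix (Fin n) (Fin m) ℍ[ℝ]) :
    (Matrix.trace (Xᴴ * X)).re = ∑ j, ∑ i, ‖X i j‖ ^ 2 := by
  simp only [Matrix.trace, Matrix.diag, Matrix.mul_apply, Matrix.conjTranspose_apply]
  rw [re_sum']
  refine Finset.sum_congr rfl fun j _ => ?_
  rw [re_sum']
  refine Finset.sum_congr rfl fun i _ => ?_
  rw [star_mul_self]
  simp [Quaternion.normSq_eq_norm_mul_self, sq]

lemma qnorm_nonneg {n m : ℕ} (X : Matrix (Fin n) (Fin m) ℍ[ℝ]) : 0 ≤ qnorm X :=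
  Real.sqrt_nonneg _

lemma qnorm_qsmul {n m : ℕ} (X : Matrix (Fin n) (Fin m) ℍ[ℝ]) (a : ℍ[ℝ]) :
    qnorm (qsmul X a) = qnorm X * ‖a‖ := by
  unfold qnorm
  rw [trace_re, trace_re]
  have h1 : ∀ (j : Fin m) (i : Fin n), ‖(qsmul X a) i j‖ ^ 2 = ‖X i j‖ ^ 2 * ‖a‖ ^ 2 := by
    intro j i; simp [qsmul, norm_mul, mul_pow]
  simp only [h1, ← Finset.sum_mul]
  rw [Real.sqrt_mul (by positivity), Real.sqrt_sq (norm_nonneg a)]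

lemma qnorm_neg {n m : ℕ} (X : Matrix (Fin n) (Fin m) ℍ[ℝ]) : qnorm (-X) = qnorm X := by
  unfold qnorm; rw [trace_re, trace_re]; simp

/-- Residual of the Gl-QFOM iterate: with `R₀ = B − A X₀`, `β = ‖R₀‖ > 0`,
`V₁ = R₀ β⁻¹`, the Arnoldi hypotheses through step `k` (and `h i j = 0` for `i > j+1`),
if `y ∈ ℍ^k` solves `H_k y = β e₁`, then the iterate `X_k = X₀ + Σ_{j=1}^k V_j y_j`
satisfies `B − A X_k = −(V_{k+1} y_k) h_{k+1,k}` and `‖B − A X_k‖ = h_{k+1,k} |y_k|`. -/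
theorem glqfom_residual (n m k : ℕ) (hk : 1 ≤ k)
    (A : Matrix (Fin n) (Fin n) ℍ[ℝ]) (B X₀ : Matrix (Fin n) (Fin m) ℍ[ℝ])
    (R₀ : Matrix (Fin n) (Fin m) ℍ[ℝ]) (hR₀ : R₀ = B - A * X₀)
    (β : ℝ) (hβ : β = qnorm R₀) (hβpos : 0 < β)
    (V : ℕ → Matrix (Fin n) (Fin m) ℍ[ℝ]) (hV1 : V 1 = qsmul R₀ ((β : ℍ[ℝ])⁻¹))
    (h : ℕ → ℕ → ℍ[ℝ]) (hA : ArnoldiData n m k A V h)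
    (hzero : ∀ i j : ℕ, j + 1 < i → h i j = 0)
    (y : ℕ → ℍ[ℝ])
    (hy : ∀ i ∈ Finset.Icc 1 k,
      ∑ j ∈ Finset.Icc 1 k, h i j * y j = if i = 1 then (β : ℍ[ℝ]) else 0)
    (Xk : Matrix (Fin n) (Fin m) ℍ[ℝ])
    (hXk : Xk = X₀ + ∑ j ∈ Finset.Icc 1 k, qsmul (V j) (y j)) :
    B - A * Xk = -(qsmul (qsmul (V (k + 1)) (y k)) (h (k + 1) k)) ∧
    qnorm (B - A * Xk) = (h (k + 1) k).re * ‖y k‖ := by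
  obtain ⟨nv1, hdef, hsub, hne, vdef⟩ := hA
  have hkmem : k ∈ Finset.Icc 1 k := by simp [hk]
  set γ : ℝ :=
    qnorm (A * V k - ∑ i ∈ Finset.Icc 1 k, qsmul (V i) (h i k)) with hγdef
  have hhk : h (k+1) k = ((γ : ℝ) : ℍ[ℝ]) := hsub k hkmem
  have hγne : γ ≠ 0 := by
    intro h0
    exact hne k hkmem (by rw [hhk, h0]; simp)
  have hγpos : 0 < γ := lt_of_le_of_ne (qnorm_nonneg _) (Ne.symm hγne)
  -- A V_j expansion
  have AVj : ∀ j ∈ Finset.Icc 1 k,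
      A * V j = ∑ i ∈ Finset.Icc 1 (j+1), qsmul (V i) (h i j) := by
    intro j hj
    rw [Finset.sum_Icc_succ_top (Nat.le_add_left 1 j), vdef j hj, qsmul_qsmul,
      inv_mul_cancel₀ (hne j hj), qsmul_one]
    abel
  -- expand the residual
  have key : B - A * Xk =
      R₀ - ∑ i ∈ Finset.Icc 1 (k+1), qsmul (V i)
        (∑ j ∈ Finset.Icc 1 k, h i j * y j) := by
    rw [hXk, Matrix.mul_add, Matrix.mul_sum, hR₀]
    have step1 : ∀ j ∈ Finset.Icc 1 k,
        A * qsmul (V j) (y j)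
          = ∑ i ∈ Finset.Icc 1 (k+1), qsmul (V i) (h i j * y j) := by
      intro j hj
      rw [mul_qsmul, AVj j hj, sum_qsmul]
      rw [Finset.sum_subset (Finset.Icc_subset_Icc_right
        (Nat.succ_le_succ (Finset.mem_Icc.mp hj).2))]
      · exact Finset.sum_congr rfl fun i _ => qsmul_qsmul _ _ _
      · intro i hi hni
        have : j + 1 < i := by
          simp only [Finset.mem_Icc] at hi hni
          omega
        rw [qsmul_qsmul, hzero i j this, zero_mul, qsmul_zero]
    rw [Finset.sum_congr rfl step1, Finset.sum_comm]
    simp only [qsmul_sum]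
    abel
  -- split off the top term
  have split : ∑ i ∈ Finset.Icc 1 (k+1), qsmul (V i)
        (∑ j ∈ Finset.Icc 1 k, h i j * y j)
      = R₀ + qsmul (V (k+1)) (h (k+1) k * y k) := by
    rw [Finset.sum_Icc_succ_top (Nat.le_add_left 1 k)]
    congr 1
    · -- lower part equals R₀
      rw [Finset.sum_eq_single_of_mem 1 (by simp [hk])]
      · have hβne : ((β : ℝ) : ℍ[ℝ]) ≠ 0 := by
          rw [← Quaternion.coe_zero]; exact Quaternion.coe_injective.ne hβpos.ne'
        rw [hy 1 (by simp [hk]), if_pos rfl, hV1, qsmul_qsmul,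
          inv_mul_cancel₀ hβne, qsmul_one]
      · intro i hi hi1
        rw [hy i hi, if_neg hi1, qsmul_zero]
    · -- top term
      congr 1
      rw [Finset.sum_eq_single_of_mem k hkmem]
      intro j hj hjk
      have : j + 1 < k + 1 := by
        simp only [Finset.mem_Icc] at hj; omega
      rw [hzero (k+1) j this, zero_mul]
  have main : B - A * Xk = -(qsmul (V (k+1)) (h (k+1) k * y k)) := by
    rw [key, split]; abel
  have hcomm : h (k+1) k * y k = y k * h (k+1) k := by
    rw [hhk]; exact Quaternion.coe_commutes γ (y k)
  have qnV : qnorm (V (k+1)) = 1 := by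
    rw [vdef k hkmem, qnorm_qsmul, hhk, ← Quaternion.coe_inv, Quaternion.norm_coe,
      Real.norm_eq_abs, abs_of_pos (inv_pos.mpr hγpos), ← hγdef, mul_inv_cancel₀ hγne]
  constructor
  · rw [main, hcomm, ← qsmul_qsmul]
  · rw [main, qnorm_neg, qnorm_qsmul, qnV, one_mul, hhk, norm_mul,
      Quaternion.norm_coe]
    simp [Real.norm_eq_abs, abs_of_pos hγpos, Quaternion.re_coe]
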